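/- For all integers m and n, with y = 3(7n^2-12mn-18m^2)(17n^2+30mn+18m^2)(23n^2+48mn+18m^2), z = 48n(n+3m)(4n+3m)(5n+6m)(17n^2+30mn+18m^2), c1 = 9(3n^2+8mn+6m^2)(23n^2+48mn+18m^2)(41n^2+48mn+18m^2), and c2 = 3(7n^2-12mn-18m^2)(11n^2+12mn+18m^2)(19n^2+36mn+18m^2), the identity 2y^2 + 2z^2 = c1^2 + c2^2 holds. -/
import Mathlib


theorem stmt_15 (m n y z c1 c2 : ℤ)
    (hy : y = 3*(7*n^2-12*m*n-18*m^2)*(17*n^2+30*m*n+18*m^2)*(23*n^2+48*m*n+18*m^2))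
    (hz : z = 48*n*(n+3*m)*(4*n+3*m)*(5*n+6*m)*(17*n^2+30*m*n+18*m^2))
    (hc1 : c1 = 9*(3*n^2+8*m*n+6*m^2)*(23*n^2+48*m*n+18*m^2)*(41*n^2+48*m*n+18*m^2))
    (hc2 : c2 = 3*(7*n^2-12*m*n-18*m^2)*(11*n^2+12*m*n+18*m^2)*(19*n^2+36*m*n+18*m^2)) :
    2*y^2 + 2*z^2 = c1^2 + c2^2 := by subst hy hz hc1 hc2; ring
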